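/- Let λ > 0 and k > 0, and let f(x) = (k/λ)·(x/λ)^{k−1}·exp(−(x/λ)^k) for x > 0 and f(x) = 0 otherwise, the density of the Weibull distribution with scale λ and shape k. Then −∫_ℝ f(x) log₂(|x| · f(x)) dx = (1 + γ)/ln 2 − log₂ k, where γ is the Euler–Mascheroni constant. In particular this value does not depend on the scale parameter λ. -/

import Mathlib

open Real MeasureTheory Set Filter Asymptotics

lemma aux_integrableOn_log_mul_exp_neg :
    IntegrableOn (fun t : ℝ => Real.log t * Real.exp (-t)) (Set.Ioi 0) := by
  have h := (mellin_hasDerivAt_of_isBigO_rpow (E := ℂ) (a := 2) (b := 0)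
      (f := fun x : ℝ => (Real.exp (-x) : ℂ)) (s := 1) ?_ ?_ ?_ ?_ ?_).1
  · unfold MellinConvergent at h
    simp only [sub_self, Complex.cpow_zero, one_smul] at h
    have h' := h.re
    refine h'.congr (Filter.Eventually.of_forall fun t => ?_)
    simp only [RCLike.re_to_complex, Complex.real_smul, ← Complex.ofReal_mul,
      Complex.ofReal_re]
  · refine (Continuous.continuousOn ?_).locallyIntegrableOn measurableSet_Ioi
    exact Complex.continuous_ofReal.comp (Real.continuous_exp.comp continuous_neg)
  · rw [← isBigO_norm_left]
    simp_rw [Complex.norm_real, isBigO_norm_left]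
    simpa only [neg_one_mul] using (isLittleO_exp_neg_mul_rpow_atTop zero_lt_one _).isBigO
  · norm_num
  · simp_rw [neg_zero, Real.rpow_zero]
    refine isBigO_const_of_tendsto (?_ : Tendsto _ _ (nhds (1 : ℂ))) one_ne_zero
    rw [(by simp : (1 : ℂ) = Real.exp (-0))]
    exact (Complex.continuous_ofReal.comp
      (Real.continuous_exp.comp continuous_neg)).continuousWithinAt
  · norm_num

lemma aux_integral_log_mul_exp_neg :
    ∫ t in Set.Ioi (0:ℝ), Real.log t * Real.exp (-t)
      = -Real.eulerMascheroniConstant := by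
  have h1 := Complex.hasDerivAt_GammaIntegral (s := 1) (by norm_num)
  have h2 : Complex.Gamma =ᶠ[nhds (1 : ℂ)] Complex.GammaIntegral := by
    filter_upwards [(isOpen_Ioi.preimage Complex.continuous_re).mem_nhds
      (by norm_num : (1 : ℂ) ∈ Complex.re ⁻¹' Set.Ioi 0)] with s hs
    exact Complex.Gamma_eq_integral hs
  have h3 := h1.congr_of_eventuallyEq h2
  have h4 := h3.unique Complex.hasDerivAt_Gamma_one
  simp only [sub_self, Complex.cpow_zero, one_mul, ← Complex.ofReal_mul] at h4
  have h5 : ((∫ t in Set.Ioi (0:ℝ), Real.log t * Real.exp (-t) : ℝ) : ℂ)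
      = ((-Real.eulerMascheroniConstant : ℝ) : ℂ) := by
    rw [Complex.ofReal_neg, ← h4]
    exact (integral_ofReal (𝕜 := ℂ)).symm
  exact_mod_cast h5

lemma aux_integral_G (k : ℝ) (hk : 0 < k) :
    ∫ t in Set.Ioi (0:ℝ), Real.exp (-t) * (Real.log k + Real.log t - t)
      = Real.log k - Real.eulerMascheroniConstant - 1 := by
  have hIexp : IntegrableOn (fun t : ℝ => Real.exp (-t)) (Set.Ioi 0) := by
    simpa using exp_neg_integrableOn_Ioi 0 one_pos
  have hIt : IntegrableOn (fun t : ℝ => Real.exp (-t) * t) (Set.Ioi 0) := by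
    have := Real.GammaIntegral_convergent (by norm_num : (0:ℝ) < 2)
    norm_num [Real.rpow_one] at this
    exact this
  have hvt : ∫ t in Set.Ioi (0:ℝ), Real.exp (-t) * t = 1 := by
    have := Real.Gamma_eq_integral (by norm_num : (0:ℝ) < 2)
    rw [Real.Gamma_two] at this
    norm_num [Real.rpow_one] at this
    exact this.symm
  have heq : ∀ t : ℝ, Real.exp (-t) * (Real.log k + Real.log t - t)
      = (Real.log k * Real.exp (-t) - Real.exp (-t) * t) + Real.log t * Real.exp (-t) :=
    fun t => by ring
  have hA : Integrable (fun t : ℝ => Real.log k * Real.exp (-t) - Real.exp (-t) * t)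
      (Measure.restrict volume (Set.Ioi 0)) := (hIexp.const_mul _).sub hIt
  simp_rw [heq]
  rw [MeasureTheory.integral_add hA aux_integrableOn_log_mul_exp_neg,
    MeasureTheory.integral_sub (hIexp.const_mul _) hIt, MeasureTheory.integral_const_mul,
    integral_exp_neg_Ioi_zero, hvt, aux_integral_log_mul_exp_neg]
  ring

/-- Differential floating-point entropy of the Weibull
distribution. -/
theorem fp_entropy_weibull
    (lam k : ℝ) (hlam : 0 < lam) (hk : 0 < k)
    (f : ℝ → ℝ)
    (hf : ∀ x, f x = if 0 < x then
      (k / lam) * (x / lam) ^ (k - 1) * Real.exp (-(x / lam) ^ k) else 0) :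
    -∫ x, f x * Real.logb 2 (|x| * f x)
      = (1 + Real.eulerMascheroniConstant) / Real.log 2 - Real.logb 2 k := by
  set G : ℝ → ℝ := fun t => Real.exp (-t) * (Real.log k + Real.log t - t) with hG
  set g : ℝ → ℝ := fun y => (k * y ^ (k - 1)) * G (y ^ k) with hg
  have key : ∫ x, f x * Real.log (|x| * f x)
      = Real.log k - Real.eulerMascheroniConstant - 1 := by
    rw [← MeasureTheory.setIntegral_eq_integral_of_forall_compl_eq_zero
      (s := Set.Ioi 0) (fun x hx => by rw [hf x, if_neg (by simpa using hx)]; ring)]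
    have hpt : ∀ x ∈ Set.Ioi (0:ℝ),
        f x * Real.log (|x| * f x) = (1 / lam) * g (lam⁻¹ * x) := by
      intro x hx
      have hx : 0 < x := hx
      have hy : 0 < x / lam := div_pos hx hlam
      have h1 : (x / lam) ^ (1 + (k - 1)) = (x / lam) ^ (1:ℝ) * (x / lam) ^ (k - 1) :=
        Real.rpow_add hy 1 (k - 1)
      rw [show (1:ℝ) + (k - 1) = k by ring, Real.rpow_one] at h1
      have hxf : |x| * f x = k * ((x / lam) ^ k * Real.exp (-(x / lam) ^ k)) := by
        rw [hf x, if_pos hx, abs_of_pos hx, h1]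
        field_simp
      have hlog : Real.log (|x| * f x)
          = Real.log k + Real.log ((x / lam) ^ k) - (x / lam) ^ k := by
        rw [hxf, Real.log_mul hk.ne' (by positivity),
          Real.log_mul (by positivity) (Real.exp_pos _).ne', Real.log_exp]
        ring
      rw [hlog, hf x, if_pos hx, hg, hG]
      simp only [← div_eq_inv_mul]
      ring
    rw [MeasureTheory.setIntegral_congr_fun measurableSet_Ioi hpt,
      MeasureTheory.integral_const_mul,
      integral_comp_mul_left_Ioi g 0 (inv_pos.mpr hlam)]
    have hsub : ∫ y in Set.Ioi (0:ℝ), g y = ∫ t in Set.Ioi (0:ℝ), G t := by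
      simpa [hg, smul_eq_mul] using integral_comp_rpow_Ioi_of_pos (g := G) hk
    rw [mul_zero, inv_inv, smul_eq_mul, hsub, aux_integral_G k hk]
    field_simp
  have hlog2 : Real.log 2 ≠ 0 := by
    simpa using Real.log_ne_zero_of_pos_of_ne_one two_pos (by norm_num)
  calc -∫ x, f x * Real.logb 2 (|x| * f x)
      = -∫ x, (f x * Real.log (|x| * f x)) / Real.log 2 := by
        simp_rw [Real.logb, mul_div_assoc]
    _ = -((∫ x, f x * Real.log (|x| * f x)) / Real.log 2) := by
        rw [MeasureTheory.integral_div]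
    _ = (1 + Real.eulerMascheroniConstant) / Real.log 2 - Real.logb 2 k := by
        rw [key, Real.logb]; ring
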